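/- Let X and Y be 1-uniformly discrete metric spaces. Suppose there is a regular map f : Y → X and a constant C such that d_X(f(y), f(y')) ≤ C·log(1 + d_Y(y, y')) + C for all y, y' ∈ Y. Then asdim_se(X) ≥ asdim(Y). -/

import Mathlib

open Metric Set

/-- A metric space is 1-uniformly discrete. -/
def UnifDiscrete (X : Type*) [MetricSpace X] : Prop :=
  ∀ x y : X, x ≠ y → 1 ≤ dist x y

/-- Bounded geometry: balls of each radius have uniformly bounded cardinality. -/
def BddGeom (X : Type*) [MetricSpace X] : Prop :=
  ∀ R : ℝ, ∃ N : ℕ, ∀ (x : X) (s : Finset X), ↑s ⊆ Metric.closedBall x R → s.card ≤ N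

/-- A regular map between metric spaces. -/
def IsRegularMap {X Y : Type*} [MetricSpace X] [MetricSpace Y] (f : X → Y) : Prop :=
  ∃ κ : ℕ, 1 ≤ κ ∧ (∀ x x' : X, dist (f x) (f x') ≤ κ * (1 + dist x x')) ∧
    ∀ y : Y, ∃ c : Finset X, c.card ≤ κ ∧ f ⁻¹' Metric.ball y 1 ⊆ ⋃ x ∈ c, Metric.ball x 1

/-- A quasi-isometric embedding. -/
def IsQIEmbedding {X Y : Type*} [MetricSpace X] [MetricSpace Y] (f : X → Y) : Prop :=
  ∃ L D : ℝ, 1 ≤ L ∧ 0 ≤ D ∧ ∀ x x' : X,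
    L⁻¹ * dist x x' - D ≤ dist (f x) (f x') ∧ dist (f x) (f x') ≤ L * dist x x' + D

/-- A coarse Lipschitz map. -/
def CoarseLipschitz {X Y : Type*} [MetricSpace X] [MetricSpace Y] (f : X → Y) : Prop :=
  ∃ K : ℝ, 1 ≤ K ∧ ∀ x x' : X, dist (f x) (f x') ≤ K * dist x x' + K

/-- The metric of `T` is the graph metric of a 3-regular tree. -/
def IsCubicTreeMetric (T : Type*) [MetricSpace T] : Prop :=
  ∃ G : SimpleGraph T, G.Connected ∧ G.IsAcyclic ∧
    (∀ v : T, (G.neighborSet v).ncard = 3) ∧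
    ∀ u v : T, dist u v = (G.dist u v : ℝ)

/-- The metric of `Z` is the graph metric of a connected graph of uniformly bounded degree. -/
def IsBddDegGraphMetric (Z : Type*) [MetricSpace Z] : Prop :=
  ∃ G : SimpleGraph Z, G.Connected ∧
    (∃ D : ℕ, ∀ v : Z, (G.neighborSet v).ncard ≤ D) ∧
    ∀ u v : Z, dist u v = (G.dist u v : ℝ)

/-- A non-decreasing subexponential function `[0,∞) → [0,∞)`. -/
def SubexpFun (g : ℝ → ℝ) : Prop :=
  MonotoneOn g (Set.Ici 0) ∧ (∀ r : ℝ, 0 ≤ g r) ∧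
    Filter.Tendsto (fun r => Real.log (g r) / r) Filter.atTop (nhds 0)

/-- Every ball of radius `r` in `Z` contains at most `g r` points. -/
def HasGrowthBound (Z : Type*) [MetricSpace Z] (g : ℝ → ℝ) : Prop :=
  ∀ (z : Z) (r : ℝ), 0 ≤ r → ∀ s : Finset Z, ↑s ⊆ Metric.closedBall z r → (s.card : ℝ) ≤ g r

def HasSubexpGrowth (Z : Type*) [MetricSpace Z] : Prop :=
  ∃ g : ℝ → ℝ, SubexpFun g ∧ HasGrowthBound Z g

def HasPolyGrowth (Z : Type*) [MetricSpace Z] : Prop :=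
  ∃ (C : ℝ) (d : ℕ), 1 ≤ C ∧ HasGrowthBound Z (fun r => C * r ^ d + C)

/-- Distinct members of the family are at distance at least `r` from each other. -/
def SepFamily {X : Type*} [MetricSpace X] (r : ℝ) (𝒰 : Set (Set X)) : Prop :=
  ∀ U ∈ 𝒰, ∀ V ∈ 𝒰, U ≠ V → ∀ x ∈ U, ∀ y ∈ V, r ≤ dist x y

/-- A decomposition of `X` into `n+1` colours of `r`-separated pieces. -/
def Decomp {X : Type*} [MetricSpace X] (n : ℕ) (r : ℝ) (𝒰 : Fin (n+1) → Set (Set X)) : Prop :=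
  (∀ x : X, ∃ i, ∃ U ∈ 𝒰 i, x ∈ U) ∧ ∀ i, SepFamily r (𝒰 i)

/-- A collection of subsets of `X` has growth uniformly controlled by the family `F`. -/
def FGrowing {X : Type*} [MetricSpace X] (F : Set (ℝ → ℝ)) (𝒰 : Set (Set X)) : Prop :=
  ∃ f ∈ F, ∃ C : ℝ, 1 ≤ C ∧ ∀ U ∈ 𝒰, ∀ (x : X) (r : ℝ), 0 ≤ r →
    ∀ s : Finset X, ↑s ⊆ U ∩ Metric.closedBall x r → (s.card : ℝ) ≤ C * f (C * r) + C

/-- `asdim_F X ≤ n`. -/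
def AsdimLE (F : Set (ℝ → ℝ)) (X : Type*) [MetricSpace X] (n : ℕ) : Prop :=
  ∀ r : ℝ, 0 < r → ∃ 𝒰 : Fin (n+1) → Set (Set X),
    Decomp n r 𝒰 ∧ FGrowing F (⋃ i, 𝒰 i)

/-- Iterated neighbourhoods `N^m_s(Y)` of `Y` with respect to the collection `𝒴`. -/
def iterNbhd {X : Type*} [MetricSpace X] (𝒴 : Set (Set X)) (s : ℝ) : ℕ → Set X → Set X
  | 0, Y => Y
  | m + 1, Y => ⋃₀ {Y' | Y' ∈ 𝒴 ∧ ∃ x ∈ Y', ∃ z ∈ iterNbhd 𝒴 s m Y, dist x z ≤ s}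

/-- `ov-asdim_F X ≤ n`. -/
def OvAsdimLE (F : Set (ℝ → ℝ)) (X : Type*) [MetricSpace X] (n : ℕ) : Prop :=
  ∀ r : ℝ, 0 < r → ∃ 𝒰 : Fin (n+1) → Set (Set X),
    Decomp n r 𝒰 ∧ ∀ s : ℝ, 1 ≤ s → ∀ m : ℕ,
      FGrowing F ((iterNbhd (⋃ i, 𝒰 i) s m) '' (⋃ i, 𝒰 i))

/-- A family of non-decreasing functions `[0,∞) → [0,∞)`. -/
def NondecrFamily (F : Set (ℝ → ℝ)) : Prop :=
  ∀ f ∈ F, MonotoneOn f (Set.Ici 0) ∧ ∀ r : ℝ, 0 ≤ r → 0 ≤ f r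

/-- The family of non-decreasing subexponential functions. -/
def seFamily : Set (ℝ → ℝ) := {g | SubexpFun g}

/-- The family of non-decreasing functions bounded by `C·r^d + C`. -/
def polyFamily (d : ℕ) : Set (ℝ → ℝ) :=
  {f | MonotoneOn f (Set.Ici 0) ∧ (∀ r : ℝ, 0 ≤ f r) ∧
    ∃ C : ℝ, 0 < C ∧ ∀ r : ℝ, 0 ≤ r → f r ≤ C * r ^ d + C}

/-- `asdim X ≤ n` : classical asymptotic dimension. -/
def ClassicalAsdimLE (X : Type*) [MetricSpace X] (n : ℕ) : Prop :=
  ∀ r : ℝ, 0 < r → ∃ 𝒰 : Fin (n+1) → Set (Set X), Decomp n r 𝒰 ∧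
    ∃ B : ℝ, ∀ U ∈ ⋃ i, 𝒰 i, ∀ x ∈ U, ∀ y ∈ U, dist x y ≤ B


section AuxChain

variable {Y : Type*} [MetricSpace Y]

/-- From reflexive-transitive closure of the `r`-step relation inside `S`
we can extract an explicit chain. -/
lemma chain_of_rtg {S : Set Y} {r : ℝ} {a b : Y} (ha : a ∈ S)
    (h : Relation.ReflTransGen (fun u v => u ∈ S ∧ v ∈ S ∧ dist u v ≤ r) a b) :
    ∃ (m : ℕ) (w : ℕ → Y), w 0 = a ∧ w m = b ∧ (∀ i ≤ m, w i ∈ S) ∧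
      ∀ i < m, dist (w i) (w (i+1)) ≤ r := by
  induction h with
  | refl =>
    exact ⟨0, fun _ => a, rfl, rfl, fun _ _ => ha, fun i hi => (Nat.not_lt_zero i hi).elim⟩
  | @tail b' c hab' hb'c ih =>
    obtain ⟨m, w, hw0, hwm, hmem, hstep⟩ := ih
    refine ⟨m + 1, fun i => if i ≤ m then w i else c, by simp [hw0], ?_, ?_, ?_⟩
    · simp
    · intro i hi
      by_cases h : i ≤ m
      · simpa [h] using hmem i h
      · simpa [h] using hb'c.2.1
    · intro i hi
      by_cases h : i + 1 ≤ m
      · have h' : i ≤ m := by omega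
        simpa [h, h'] using hstep i (by omega)
      · have him : i = m := by omega
        have h' : i ≤ m := by omega
        have h'' : ¬ (i + 1 ≤ m) := by omega
        simp only [if_pos h', if_neg h'']
        rw [him, hwm]
        exact hb'c.2.2

lemma dist_chain {w : ℕ → Y} {r : ℝ} (hr : 0 ≤ r) (m : ℕ)
    (h : ∀ i < m, dist (w i) (w (i+1)) ≤ r) : dist (w 0) (w m) ≤ m * r := by
  induction m with
  | zero => simp
  | succ k ih =>
    have h1 := ih (fun i hi => h i (by omega))
    have h2 := h k (by omega)
    have h3 := dist_triangle (w 0) (w k) (w (k+1))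
    push_cast
    push_cast at h1
    nlinarith

lemma exp_half_le_two : Real.exp (1/2 : ℝ) ≤ 2 := by
  have h1 : Real.exp (1/2:ℝ) * Real.exp (1/2:ℝ) = Real.exp 1 := by
    rw [← Real.exp_add]; norm_num
  nlinarith [Real.exp_one_lt_d9, Real.exp_pos (1/2:ℝ)]

end AuxChain

set_option maxHeartbeats 1000000

/-- If there is a regular map `f : Y → X` whose image is exponentially
distorted (`d(f y, f y') ≤ C·log(1 + d(y, y')) + C`), then `asdim_se(X) ≥ asdim(Y)`. -/
theorem asdim_se_ge_asdim_of_exp_distorted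
    (X Y : Type*) [MetricSpace X] [MetricSpace Y]
    (hX : UnifDiscrete X) (hY : UnifDiscrete Y)
    (f : Y → X) (hf : IsRegularMap f) (C : ℝ)
    (hdist : ∀ y y' : Y, dist (f y) (f y') ≤ C * Real.log (1 + dist y y') + C)
    (n : ℕ) (hn : AsdimLE seFamily X n) :
    ClassicalAsdimLE Y n := by
  classical
  intro r hr
  -- replace C by C₁ := max C 1
  set C₁ : ℝ := max C 1 with hC₁def
  have hC₁ : 1 ≤ C₁ := le_max_right _ _
  have hC₁0 : 0 < C₁ := by linarith
  have hdist1 : ∀ y y' : Y, dist (f y) (f y') ≤ C₁ * Real.log (1 + dist y y') + C₁ := by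
    intro y y'
    have h0 := hdist y y'
    have hlog0 : 0 ≤ Real.log (1 + dist y y') :=
      Real.log_nonneg (by linarith [dist_nonneg (x := y) (y := y')])
    have hCle : C ≤ C₁ := le_max_left _ _
    nlinarith
  -- the scale in X
  set R : ℝ := C₁ * Real.log (1 + r) + C₁ + 1 with hRdef
  have hlogr : 0 ≤ Real.log (1 + r) := Real.log_nonneg (by linarith)
  have hR : 0 < R := by nlinarith
  obtain ⟨𝒰, ⟨hcover, hsep⟩, g, hg, C₀, hC₀1, hgrow⟩ := hn R hR
  have hC₀0 : 0 < C₀ := by linarith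
  obtain ⟨hgmono, hgnn, hgtend⟩ : SubexpFun g := hg
  obtain ⟨κ, hκ1, _hκlip, hκreg⟩ := hf
  have hκ0 : (0:ℝ) ≤ (κ:ℝ) := by positivity
  have hκ1' : (1:ℝ) ≤ (κ:ℝ) := by exact_mod_cast hκ1
  -- fibers of f have at most κ elements
  have fiber : ∀ x : X, ∃ c : Finset Y, c.card ≤ κ ∧ ∀ z, f z = x → z ∈ c := by
    intro x
    obtain ⟨c, hc, hsub⟩ := hκreg x
    refine ⟨c, hc, fun z hz => ?_⟩
    have hz1 : z ∈ f ⁻¹' Metric.ball x 1 := by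
      simp [Set.mem_preimage, Metric.mem_ball, hz]
    have := hsub hz1
    rw [Set.mem_iUnion₂] at this
    obtain ⟨y, hy, hzy⟩ := this
    have : z = y := by
      by_contra hne
      exact absurd (Metric.mem_ball.mp hzy) (not_lt.mpr (hY z y hne))
    rwa [this]
  -- subexponential bound on g
  set ε : ℝ := 1 / (2 * C₁ * C₀) with hεdef
  have hε : 0 < ε := by positivity
  obtain ⟨r₁, hr₁⟩ := (Metric.tendsto_atTop.mp hgtend) ε hε
  set r₂ : ℝ := max r₁ 1 with hr₂def
  have hr₂0 : (0:ℝ) ≤ r₂ := le_trans zero_le_one (le_max_right _ _)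
  set A : ℝ := g r₂ with hAdef
  have hA0 : 0 ≤ A := hgnn r₂
  have hgb : ∀ t : ℝ, 0 ≤ t → g t ≤ A + Real.exp (ε * t) := by
    intro t ht
    rcases le_total t r₂ with h | h
    · have := hgmono (Set.mem_Ici.mpr ht) (Set.mem_Ici.mpr hr₂0) h
      have := Real.exp_pos (ε * t)
      linarith
    · have ht1 : (1:ℝ) ≤ t := le_trans (le_max_right _ _) h
      have htpos : (0:ℝ) < t := by linarith
      have hd := hr₁ t (le_trans (le_max_left _ _) h)
      rw [Real.dist_eq, sub_zero] at hd
      have hlt : Real.log (g t) < ε * t := by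
        have h2 : Real.log (g t) / t < ε := lt_of_abs_lt hd
        calc Real.log (g t) = Real.log (g t) / t * t := by field_simp
        _ < ε * t := by exact mul_lt_mul_of_pos_right h2 htpos
      have hexp : g t ≤ Real.exp (ε * t) := by
        rcases le_or_gt (g t) 1 with h1 | h1
        · exact le_trans h1 (Real.one_le_exp (by positivity))
        · have : g t = Real.exp (Real.log (g t)) := (Real.exp_log (by linarith)).symm
          rw [this]
          exact (Real.exp_le_exp.mpr hlt.le)
      linarith
  -- the step relation and components
  have hstep_symm : ∀ S : Set Y,
      Symmetric (fun u v : Y => u ∈ S ∧ v ∈ S ∧ dist u v ≤ r) := by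
    intro S u v h
    exact ⟨h.2.1, h.1, by rw [dist_comm]; exact h.2.2⟩
  set Rel : Set Y → Y → Y → Prop := fun S u v => u ∈ S ∧ v ∈ S ∧ dist u v ≤ r with hReldef
  have hrtg_symm : ∀ S : Set Y, Symmetric (Relation.ReflTransGen (Rel S)) := by
    intro S
    intro a b h
    induction h with
    | refl => exact Relation.ReflTransGen.refl
    | tail _ hbc ih => exact Relation.ReflTransGen.head (hstep_symm S hbc) ih
  set 𝒱 : Fin (n+1) → Set (Set Y) := fun i =>
    {V | ∃ U ∈ 𝒰 i, ∃ y : Y, f y ∈ U ∧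
      V = {z | z ∈ f ⁻¹' U ∧ Relation.ReflTransGen (Rel (f ⁻¹' U)) y z}} with h𝒱def
  refine ⟨𝒱, ⟨?_, ?_⟩, ?_⟩
  · -- cover
    intro y
    obtain ⟨i, U, hU, hfy⟩ := hcover (f y)
    exact ⟨i, _, ⟨U, hU, y, hfy, rfl⟩, ⟨hfy, Relation.ReflTransGen.refl⟩⟩
  · -- separation
    intro i V hV V' hV' hne a ha b hb
    obtain ⟨U, hU, y, hy, rfl⟩ := hV
    obtain ⟨U', hU', y', hy', rfl⟩ := hV'
    by_contra hlt
    push_neg at hlt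
    by_cases hUU : U = U'
    · subst hUU
      apply hne
      have hba : Rel (f ⁻¹' U) b a := ⟨hb.1, ha.1, by rw [dist_comm]; linarith⟩
      have hab : Rel (f ⁻¹' U) a b := ⟨ha.1, hb.1, hlt.le⟩
      ext z
      simp only [Set.mem_setOf_eq]
      constructor
      · rintro ⟨hzS, hz⟩
        exact ⟨hzS, (hb.2.trans (Relation.ReflTransGen.single hba)).trans
          (((hrtg_symm _) ha.2).trans hz)⟩
      · rintro ⟨hzS, hz⟩
        exact ⟨hzS, (ha.2.trans (Relation.ReflTransGen.single hab)).trans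
          (((hrtg_symm _) hb.2).trans hz)⟩
    · have h1 := hsep i U hU U' hU' hUU (f a) ha.1 (f b) hb.1
      have h2 := hdist1 a b
      have h3 : Real.log (1 + dist a b) ≤ Real.log (1 + r) :=
        Real.log_le_log (by linarith [dist_nonneg (x := a) (y := b)]) (by linarith)
      nlinarith
  · -- bounded diameter
    refine ⟨2*r*((κ:ℝ)*(C₀*A+C₀)) + 1 + (2*(κ:ℝ)*C₀)^2*r^2, ?_⟩
    intro V hV a ha b hb
    rw [Set.mem_iUnion] at hV
    obtain ⟨i, hVi⟩ := hV
    obtain ⟨U, hU, y, hy, rfl⟩ := hVi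
    set S : Set Y := f ⁻¹' U with hSdef
    -- a chain from a to b inside S
    have hrtg_ab : Relation.ReflTransGen (Rel S) a b :=
      ((hrtg_symm S) ha.2).trans hb.2
    have hex : ∃ m : ℕ, ∃ w : ℕ → Y, w 0 = a ∧ w m = b ∧ (∀ i ≤ m, w i ∈ S) ∧
        ∀ i < m, dist (w i) (w (i+1)) ≤ r := by
      obtain ⟨m, w, h1, h2, h3, h4⟩ := chain_of_rtg ha.1 hrtg_ab
      exact ⟨m, w, h1, h2, h3, h4⟩
    set m₀ : ℕ := Nat.find hex with hm₀def
    obtain ⟨w, hw0, hwm, hmem, hstepw⟩ := Nat.find_spec hex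
    -- minimal chains are injective
    have key : ∀ i j : ℕ, i < j → j ≤ m₀ → w i ≠ w j := by
      intro i j hij hjm heq
      have hP : ∃ w' : ℕ → Y, w' 0 = a ∧ w' (m₀ - (j - i)) = b ∧
          (∀ k ≤ m₀ - (j - i), w' k ∈ S) ∧
          ∀ k < m₀ - (j - i), dist (w' k) (w' (k+1)) ≤ r := by
        refine ⟨fun k => if k ≤ i then w k else w (k + (j - i)), by simp [hw0], ?_, ?_, ?_⟩
        · show (if m₀ - (j - i) ≤ i then w (m₀ - (j - i)) else w (m₀ - (j - i) + (j - i))) = b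
          by_cases h : m₀ - (j - i) ≤ i
          · have hji : j = m₀ := by omega
            have hii : m₀ - (j - i) = i := by omega
            rw [if_pos h, hii, heq, hji, hm₀def]
            exact hwm
          · have hplus : m₀ - (j - i) + (j - i) = m₀ := by omega
            rw [if_neg h, hplus, hm₀def]
            exact hwm
        · intro k hk
          by_cases h : k ≤ i
          · simpa [h] using hmem k (by omega)
          · simpa [h] using hmem (k + (j - i)) (by omega)
        · intro k hk
          show dist (if k ≤ i then w k else w (k + (j - i)))
            (if k + 1 ≤ i then w (k+1) else w (k + 1 + (j - i))) ≤ r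
          by_cases h1 : k + 1 ≤ i
          · have h2 : k ≤ i := by omega
            simpa [h1, h2] using hstepw k (by omega)
          · by_cases h2 : k ≤ i
            · have hki : k = i := by omega
              have hjm' : j < m₀ := by omega
              have h3 : k + 1 + (j - i) = j + 1 := by omega
              rw [if_pos h2, if_neg h1, h3, hki, heq]
              exact hstepw j (by omega)
            · have h3 : ¬ (k + 1 ≤ i) := by omega
              have h4 : k + 1 + (j - i) = k + (j - i) + 1 := by omega
              rw [if_neg h2, if_neg h3, h4]
              exact hstepw (k + (j - i)) (by omega)
      exact Nat.find_min hex (show m₀ - (j - i) < m₀ by omega) hP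
    -- cardinality counting
    set s : Finset Y := (Finset.range (m₀+1)).image w with hsdef
    have hsinj : Set.InjOn w ↑(Finset.range (m₀+1)) := by
      intro i hi j hj heq
      simp only [Finset.coe_range, Set.mem_Iio] at hi hj
      rcases lt_trichotomy i j with h | h | h
      · exact absurd heq (key i j h (by omega))
      · exact h
      · exact absurd heq.symm (key j i h (by omega))
    have hscard : s.card = m₀ + 1 := by
      rw [hsdef, Finset.card_image_of_injOn hsinj, Finset.card_range]
    set t : Finset X := s.image f with htdef
    have hst : s.card ≤ κ * t.card := by
      apply Finset.card_le_mul_card_image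
      intro x hx
      obtain ⟨c, hc, hcmem⟩ := fiber x
      refine le_trans (Finset.card_le_card ?_) hc
      intro z hz
      rw [Finset.mem_filter] at hz
      exact hcmem z hz.2
    -- the image lies in a controlled ball
    have hD0 : (0:ℝ) ≤ (m₀:ℝ) * r := by positivity
    set ρ : ℝ := C₁ * Real.log (1 + (m₀:ℝ)*r) + C₁ with hρdef
    have hlogD : 0 ≤ Real.log (1 + (m₀:ℝ)*r) := Real.log_nonneg (by linarith)
    have hρ0 : 0 ≤ ρ := by nlinarith
    have hdw : ∀ i ≤ m₀, dist a (w i) ≤ (m₀:ℝ) * r := by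
      intro i hi
      have h1 : dist (w 0) (w i) ≤ (i:ℝ) * r :=
        dist_chain hr.le i (fun k hk => hstepw k (by omega))
      have h2 : (i:ℝ) * r ≤ (m₀:ℝ) * r := by
        apply mul_le_mul_of_nonneg_right _ hr.le
        exact_mod_cast hi
      rw [hw0] at h1
      linarith
    have ht_sub : ↑t ⊆ U ∩ Metric.closedBall (f a) ρ := by
      intro x hx
      rw [Finset.coe_image] at hx
      obtain ⟨z, hz, rfl⟩ := hx
      rw [Finset.coe_image] at hz
      obtain ⟨i, hi, rfl⟩ := hz
      simp only [Finset.coe_range, Set.mem_Iio] at hi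
      have hiS : w i ∈ S := hmem i (by omega)
      constructor
      · exact hiS
      · rw [Metric.mem_closedBall]
        have h1 := hdist1 (w i) a
        have h2 : dist (w i) a ≤ (m₀:ℝ) * r := by
          rw [dist_comm]; exact hdw i (by omega)
        have h3 : Real.log (1 + dist (w i) a) ≤ Real.log (1 + (m₀:ℝ)*r) :=
          Real.log_le_log (by linarith [dist_nonneg (x := w i) (y := a)]) (by linarith)
        have h4 : C₁ * Real.log (1 + dist (w i) a) ≤ C₁ * Real.log (1 + (m₀:ℝ)*r) :=
          mul_le_mul_of_nonneg_left h3 (by linarith)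
        rw [hρdef]
        linarith
    have hUmem : U ∈ ⋃ i, 𝒰 i := Set.mem_iUnion.mpr ⟨i, hU⟩
    have htcard : (t.card:ℝ) ≤ C₀ * g (C₀ * ρ) + C₀ :=
      hgrow U hUmem (f a) ρ hρ0 t ht_sub
    -- apply the subexponential bound
    set u : ℝ := Real.exp (Real.log (1 + (m₀:ℝ)*r) / 2) with hudef
    have hu : 0 < u := Real.exp_pos _
    have hu2 : u^2 = 1 + (m₀:ℝ)*r := by
      rw [hudef, sq, ← Real.exp_add, add_halves, Real.exp_log (by linarith)]
    have harg : ε * (C₀ * ρ) = Real.log (1 + (m₀:ℝ)*r) / 2 + 1/2 := by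
      rw [hεdef, hρdef]
      field_simp
    have hexp_half : Real.exp (1/2 : ℝ) ≤ 2 := exp_half_le_two
    have hgval : g (C₀ * ρ) ≤ A + 2 * u := by
      have h1 := hgb (C₀ * ρ) (by positivity)
      have h2 : Real.exp (ε * (C₀ * ρ)) = u * Real.exp (1/2:ℝ) := by
        rw [harg, Real.exp_add, hudef]
      nlinarith [Real.exp_pos (1/2:ℝ)]
    -- final arithmetic
    have hfin : (m₀:ℝ) + 1 ≤ (κ:ℝ) * (C₀ * (A + 2*u) + C₀) := by
      have h1 : ((m₀:ℝ) + 1) = (s.card : ℝ) := by rw [hscard]; push_cast; ring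
      have h2 : (s.card : ℝ) ≤ (κ:ℝ) * (t.card : ℝ) := by exact_mod_cast hst
      have h3 : (κ:ℝ) * (t.card:ℝ) ≤ (κ:ℝ) * (C₀ * (A + 2*u) + C₀) := by
        apply mul_le_mul_of_nonneg_left _ hκ0
        nlinarith
      linarith
    have hdab : dist a b ≤ (m₀:ℝ) * r := by
      have h1 : dist (w 0) (w m₀) ≤ (m₀:ℝ) * r := dist_chain hr.le m₀ hstepw
      rwa [hw0, hwm] at h1
    have hmul := mul_le_mul_of_nonneg_left hfin hr.le
    nlinarith [sq_nonneg (u - 2*(κ:ℝ)*C₀*r), hu2, hdab, hmul]
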